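/- Every unbounded orbit of Q converges to infinity: if x₀ ∈ ℕ is such that the sequence (Q^n(x₀)) is unbounded, then Q^n(x₀) → ∞ as n → ∞; in particular an unbounded orbit has no bounded subsequence. -/

import Mathlib

/-- The divide-or-choose-2 map: `Q n = n/2` if `n` is even, `Q n = n*(n-1)/2` if `n` is odd. -/
def Q (n : ℕ) : ℕ := if n % 2 = 0 then n / 2 else n * (n - 1) / 2

/-- If the orbit repeats a value, it is bounded. -/
lemma bounded_of_repeat (x₀ a c : ℕ) (hac : a < c) (heq : Q^[a] x₀ = Q^[c] x₀) :
    ∃ M : ℕ, ∀ n : ℕ, Q^[n] x₀ ≤ M := by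
  refine ⟨(Finset.range c).sup (fun j => Q^[j] x₀), fun n => ?_⟩
  have key : ∀ n, ∃ j < c, Q^[n] x₀ = Q^[j] x₀ := by
    intro n
    induction n using Nat.strong_induction_on with
    | _ n ih =>
      by_cases hn : n < c
      · exact ⟨n, hn, rfl⟩
      · have hnc : c ≤ n := le_of_not_gt hn
        have hstep : Q^[n] x₀ = Q^[n - c + a] x₀ := by
          have h1 : Q^[n] x₀ = Q^[n - c] (Q^[c] x₀) := by
            rw [← Function.iterate_add_apply]; congr 1; omega
          rw [h1, ← heq, ← Function.iterate_add_apply]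
        rw [hstep]
        exact ih (n - c + a) (by omega)
  obtain ⟨j, hj, hje⟩ := key n
  rw [hje]
  exact Finset.le_sup (f := fun j => Q^[j] x₀) (Finset.mem_range.mpr hj)

/-- Every unbounded orbit of `Q` converges to infinity. -/
theorem stmt_14 (x₀ : ℕ) (h : ¬ ∃ M : ℕ, ∀ n : ℕ, Q^[n] x₀ ≤ M) :
    Filter.Tendsto (fun n : ℕ => Q^[n] x₀) Filter.atTop Filter.atTop := by
  by_contra hT
  rw [Filter.tendsto_atTop] at hT
  push_neg at hT
  obtain ⟨b, hb⟩ := hT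
  simp only [← not_le] at hb
  have hinf : {n | ¬ b ≤ Q^[n] x₀}.Infinite := by
    rwa [Nat.frequently_atTop_iff_infinite] at hb
  obtain ⟨a, ha, c, hc, hne, heq⟩ :=
    hinf.exists_ne_map_eq_of_mapsTo (f := fun n => Q^[n] x₀)
      (t := Set.Iio b) (fun n hn => Nat.lt_of_not_le hn) (Set.finite_Iio b)
  rcases hne.lt_or_gt with hac | hac
  · exact h (bounded_of_repeat x₀ a c hac heq)
  · exact h (bounded_of_repeat x₀ c a hac heq.symm)
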